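/- Let $W$ be a real random variable symmetric about $0$ with $\operatorname{E}|W|>0$, and let $g:\mathbb{R}\to(0,\infty)$ be strictly increasing and bounded. Suppose constants $c_0 \in \mathbb{R}$ and $\mu \in \mathbb{R}$ satisfy the two moment equations $\operatorname{E}\{g(W)\} = \operatorname{E}\{\exp(c_0 + \mu W)\}$ and $\operatorname{E}\{W g(W)\} = \operatorname{E}\{W \exp(c_0 + \mu W)\}$, with all expectations finite. Then $\mu > 0$. -/

import Mathlib

open MeasureTheory

lemma symm_key {Ω : Type*} [MeasurableSpace Ω] (P : Measure Ω)
    (W : Ω → ℝ) (hW : Measurable W)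
    (hsymm : Measure.map W P = Measure.map (fun ω => -W ω) P)
    (f : ℝ → ℝ) (hf : Measurable f)
    (hfi : Integrable (fun ω => f (W ω)) P) :
    Integrable (fun ω => f (-W ω)) P ∧ (∫ ω, f (W ω) ∂P) = ∫ ω, f (-W ω) ∂P := by
  have h1 : Integrable f (Measure.map W P) :=
    (integrable_map_measure hf.aestronglyMeasurable hW.aemeasurable).mpr hfi
  have h2 : Integrable f (Measure.map (fun ω => -W ω) P) := hsymm ▸ h1
  have h3 : Integrable (fun ω => f (-W ω)) P :=
    (integrable_map_measure hf.aestronglyMeasurable hW.neg.aemeasurable).mp h2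
  refine ⟨h3, ?_⟩
  calc ∫ ω, f (W ω) ∂P = ∫ x, f x ∂(Measure.map W P) :=
        (integral_map hW.aemeasurable hf.aestronglyMeasurable).symm
    _ = ∫ x, f x ∂(Measure.map (fun ω => -W ω) P) := by rw [hsymm]
    _ = ∫ ω, f (-W ω) ∂P := integral_map hW.neg.aemeasurable hf.aestronglyMeasurable

theorem stmt7
    {Ω : Type*} [MeasurableSpace Ω] (P : Measure Ω) [IsProbabilityMeasure P]
    (W : Ω → ℝ) (hW : Measurable W)
    (hsymm : Measure.map W P = Measure.map (fun ω => -W ω) P)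
    (habs : Integrable (fun ω => |W ω|) P)
    (habs_pos : 0 < ∫ ω, |W ω| ∂P)
    (g : ℝ → ℝ) (hg_pos : ∀ x, 0 < g x) (hg_mono : StrictMono g)
    (hg_bdd : ∃ M, ∀ x, g x ≤ M)
    (c₀ μ : ℝ)
    (hint1 : Integrable (fun ω => g (W ω)) P)
    (hint2 : Integrable (fun ω => W ω * g (W ω)) P)
    (hint3 : Integrable (fun ω => Real.exp (c₀ + μ * W ω)) P)
    (hint4 : Integrable (fun ω => W ω * Real.exp (c₀ + μ * W ω)) P)
    (heq1 : ∫ ω, g (W ω) ∂P = ∫ ω, Real.exp (c₀ + μ * W ω) ∂P)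
    (heq2 : ∫ ω, W ω * g (W ω) ∂P = ∫ ω, W ω * Real.exp (c₀ + μ * W ω) ∂P) :
    0 < μ := by
  have hgm : Measurable g := hg_mono.monotone.measurable
  -- Step 1: 0 < ∫ W g(W)
  have hkey := symm_key P W hW hsymm (fun x => x * g x) (measurable_id.mul hgm) hint2
  have hint2' : Integrable (fun ω => W ω * g (-W ω)) P := by
    have h := hkey.1
    rw [show (fun ω => W ω * g (-W ω)) = fun ω => -((fun x => x * g x) (-W ω))
      from funext fun ω => by simp]
    exact h.neg
  have hpos : 0 < ∫ ω, W ω * g (W ω) ∂P := by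
    by_contra h
    push_neg at h
    have hφi : Integrable (fun ω => W ω * (g (W ω) - g (-W ω))) P := by
      simpa [mul_sub] using (by have h : Integrable (fun ω => W ω * g (W ω) - W ω * g (-W ω)) P := hint2.sub hint2'; exact h)
    have hφnn : ∀ ω, 0 ≤ W ω * (g (W ω) - g (-W ω)) := by
      intro ω
      rcases lt_trichotomy (W ω) 0 with h'|h'|h'
      · have : g (W ω) < g (-W ω) := hg_mono (by linarith)
        nlinarith
      · simp [h']
      · have : g (-W ω) < g (W ω) := hg_mono (by linarith)
        nlinarith
    have hsum : ∫ ω, W ω * (g (W ω) - g (-W ω)) ∂P = 2 * ∫ ω, W ω * g (W ω) ∂P := by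
      have h2 : ∫ ω, W ω * g (-W ω) ∂P = - ∫ ω, W ω * g (W ω) ∂P := by
        have := hkey.2
        simp only [neg_mul] at this
        rw [this, integral_neg, neg_neg]
      rw [show (fun ω => W ω * (g (W ω) - g (-W ω))) =
          fun ω => W ω * g (W ω) - W ω * g (-W ω) from funext fun ω => by ring]
      rw [integral_sub hint2 hint2', h2]; ring
    have hle : ∫ ω, W ω * (g (W ω) - g (-W ω)) ∂P ≤ 0 := by
      rw [hsum]; linarith
    have hzero : ∫ ω, W ω * (g (W ω) - g (-W ω)) ∂P = 0 :=
      le_antisymm hle (integral_nonneg hφnn)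
    have hae : (fun ω => W ω * (g (W ω) - g (-W ω))) =ᵐ[P] 0 :=
      (integral_eq_zero_iff_of_nonneg hφnn hφi).mp hzero
    have hWae : (fun ω => |W ω|) =ᵐ[P] 0 := by
      filter_upwards [hae] with ω hω
      simp only [Pi.zero_apply] at hω ⊢
      by_contra hne
      have hWne : W ω ≠ 0 := fun h0 => hne (by simp [h0])
      rcases lt_or_gt_of_ne hWne with h'|h'
      · have : g (W ω) < g (-W ω) := hg_mono (by linarith)
        nlinarith
      · have : g (-W ω) < g (W ω) := hg_mono (by linarith)
        nlinarith
    have : ∫ ω, |W ω| ∂P = 0 := integral_eq_zero_of_ae hWae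
    linarith
  rcases lt_trichotomy μ 0 with hμ|hμ|hμ
  · -- μ < 0 : RHS of heq2 is ≤ 0
    exfalso
    have hkey2 := symm_key P W hW hsymm (fun x => x * Real.exp (c₀ + μ * x))
      (measurable_id.mul (Real.measurable_exp.comp (measurable_const.add (measurable_const.mul measurable_id)))) hint4
    have hint4' : Integrable (fun ω => W ω * Real.exp (c₀ - μ * W ω)) P := by
      have h := hkey2.1
      rw [show (fun ω => W ω * Real.exp (c₀ - μ * W ω)) =
          fun ω => -((fun x => x * Real.exp (c₀ + μ * x)) (-W ω))
        from funext fun ω => by simp [sub_eq_add_neg, mul_neg]]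
      exact h.neg
    have h2 : ∫ ω, W ω * Real.exp (c₀ - μ * W ω) ∂P
        = - ∫ ω, W ω * Real.exp (c₀ + μ * W ω) ∂P := by
      have := hkey2.2
      simp only [neg_mul, mul_neg, ← sub_eq_add_neg] at this
      rw [this, integral_neg, neg_neg]
    have hψ : ∫ ω, W ω * (Real.exp (c₀ + μ * W ω) - Real.exp (c₀ - μ * W ω)) ∂P
        = 2 * ∫ ω, W ω * Real.exp (c₀ + μ * W ω) ∂P := by
      rw [show (fun ω => W ω * (Real.exp (c₀ + μ * W ω) - Real.exp (c₀ - μ * W ω))) =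
          fun ω => W ω * Real.exp (c₀ + μ * W ω) - W ω * Real.exp (c₀ - μ * W ω)
          from funext fun ω => by ring]
      rw [integral_sub hint4 hint4', h2]; ring
    have hnp : ∀ ω, W ω * (Real.exp (c₀ + μ * W ω) - Real.exp (c₀ - μ * W ω)) ≤ 0 := by
      intro ω
      rcases le_or_gt (W ω) 0 with h'|h'
      · have : Real.exp (c₀ - μ * W ω) ≤ Real.exp (c₀ + μ * W ω) :=
          Real.exp_le_exp.mpr (by nlinarith)
        nlinarith
      · have : Real.exp (c₀ + μ * W ω) ≤ Real.exp (c₀ - μ * W ω) :=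
          Real.exp_le_exp.mpr (by nlinarith)
        nlinarith
    have : ∫ ω, W ω * (Real.exp (c₀ + μ * W ω) - Real.exp (c₀ - μ * W ω)) ∂P ≤ 0 := integral_nonpos hnp
    rw [hψ] at this
    rw [heq2] at hpos
    linarith
  · -- μ = 0
    exfalso
    have hWint : Integrable W P :=
      (integrable_norm_iff hW.aestronglyMeasurable).mp (by simpa [Real.norm_eq_abs] using habs)
    have hkeyW := symm_key P W hW hsymm id measurable_id hWint
    have hEW : ∫ ω, W ω ∂P = 0 := by
      have := hkeyW.2
      simp only [id] at this
      rw [integral_neg] at this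
      linarith
    rw [heq2] at hpos
    simp only [hμ, zero_mul, add_zero] at hpos
    rw [integral_mul_const, hEW] at hpos
    simp at hpos
  · exact hμ
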